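/- Let (κ_e) be nonnegative edge capacities on a locally finite rooted tree. Then MaxFlow(0→∞, ⟨κ_e⟩) > 0 if and only if MaxFlow(0→∞, ⟨min(κ_e,1)⟩) > 0. -/

import Mathlib

open scoped ENNReal NNReal Classical

/-- A locally finite rooted tree, encoded by a parent function: every vertex eventually
reaches the root by iterating `parent`, and every vertex has finitely many children.
Non-root vertices are identified with the edge joining them to their parent. -/
structure GrowingTree where
  V : Type
  root : V
  parent : V → V
  parent_root : parent root = root
  reaches_root : ∀ v, ∃ n, parent^[n] v = root
  locallyFinite : ∀ v, {w | parent w = v ∧ w ≠ root}.Finite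

namespace GrowingTree

variable (T : GrowingTree)

/-- The children of a vertex. -/
noncomputable def children (v : T.V) : Finset T.V := (T.locallyFinite v).toFinset

/-- The depth (distance from the root) of a vertex. -/
noncomputable def depth (v : T.V) : ℕ := Nat.find (T.reaches_root v)

/-- A flow from the root to infinity: at every vertex the value (the flow through the
edge above the vertex, resp. the strength at the root) equals the total flow to the
children. -/
def IsFlow (θ : T.V → ℝ≥0) : Prop :=
  ∀ v, θ v = ∑ w ∈ T.children v, θ w

/-- The strength of a flow: the total outflow from the root. -/
def strength (θ : T.V → ℝ≥0) : ℝ≥0 := θ T.root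

/-- A flow respects the capacities `κ` if it is bounded by `κ` on every edge
(i.e. at every non-root vertex). -/
def Respects (θ : T.V → ℝ≥0) (κ : T.V → ℝ≥0) : Prop :=
  ∀ v, v ≠ T.root → θ v ≤ κ v

/-- The maximal flow from the root to infinity with respect to capacities `κ`. -/
noncomputable def maxFlow (κ : T.V → ℝ≥0) : ℝ≥0∞ :=
  ⨆ θ : {θ : T.V → ℝ≥0 // T.IsFlow θ ∧ T.Respects θ κ}, (T.strength θ.1 : ℝ≥0∞)

/-- An infinite self-avoiding path starting at the root. -/
def IsRay (r : ℕ → T.V) : Prop :=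
  r 0 = T.root ∧ ∀ n, T.parent (r (n + 1)) = r n ∧ r (n + 1) ≠ T.root

/-- A cutset separating the root from infinity: a set of edges (non-root vertices) met by
every infinite self-avoiding path starting at the root. -/
def IsCutset (C : Set T.V) : Prop :=
  T.root ∉ C ∧ ∀ r : ℕ → T.V, T.IsRay r → ∃ n, r (n + 1) ∈ C

/-- The total capacity of a cutset. -/
noncomputable def cutsetSum (κ : T.V → ℝ≥0) (C : Set T.V) : ℝ≥0∞ :=
  ∑' v : C, (κ v.1 : ℝ≥0∞)

/-- The minimum of the capacities along the path from the root to an edge (inclusive). -/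
noncomputable def minCap (κ : T.V → ℝ≥0) (v : T.V) : ℝ≥0 :=
  if h : v = T.root then κ v
  else
    (Finset.range (T.depth v)).inf'
      (by
        rw [Finset.nonempty_range_iff]
        intro h0
        apply h
        have hs : T.parent^[T.depth v] v = T.root := Nat.find_spec (T.reaches_root v)
        rw [h0] at hs
        simpa using hs)
      (fun k => κ (T.parent^[k] v))

/-- The energy of a flow. -/
noncomputable def energy (θ : T.V → ℝ≥0) : ℝ≥0∞ :=
  ∑' v : {v : T.V // v ≠ T.root}, ((θ v.1 : ℝ≥0∞)) ^ 2

end GrowingTree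

/-- The maximal flow is positive iff the maximal flow for the capacities truncated at `1`
is positive. -/
lemma GrowingTree.flow_le_root (T : GrowingTree) (θ : T.V → ℝ≥0) (h : T.IsFlow θ)
    (v : T.V) : θ v ≤ θ T.root := by
  have hstep : ∀ w, θ w ≤ θ (T.parent w) := by
    intro w
    by_cases hw : w = T.root
    · subst hw; rw [T.parent_root]
    · rw [h (T.parent w)]
      refine Finset.single_le_sum (f := θ) (fun i _ => zero_le) ?_
      simp only [GrowingTree.children, Set.Finite.mem_toFinset, Set.mem_setOf_eq]
      exact ⟨trivial, hw⟩
  have hiter : ∀ n w, θ w ≤ θ (T.parent^[n] w) := by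
    intro n
    induction n with
    | zero => intro w; simp
    | succ n ih =>
      intro w
      rw [Function.iterate_succ_apply']
      exact (ih w).trans (hstep _)
  obtain ⟨n, hn⟩ := T.reaches_root v
  have := hiter n v
  rwa [hn] at this

lemma GrowingTree.flow_smul (T : GrowingTree) (θ : T.V → ℝ≥0) (h : T.IsFlow θ)
    (c : ℝ≥0) : T.IsFlow (fun v => c * θ v) := by
  intro v
  show c * θ v = ∑ w ∈ T.children v, c * θ w
  rw [← Finset.mul_sum, h v]

theorem maxFlow_pos_iff_truncated (T : GrowingTree) (κ : T.V → ℝ≥0) :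
    0 < T.maxFlow κ ↔ 0 < T.maxFlow (fun v => min (κ v) 1) := by
  constructor
  · intro h
    obtain ⟨⟨θ, hflow, hresp⟩, hpos⟩ := lt_iSup_iff.mp h
    have hs : 0 < θ T.root := by
      simpa [GrowingTree.strength] using hpos
    set s : ℝ≥0 := θ T.root with hsdef
    set c : ℝ≥0 := (max s 1)⁻¹ with hcdef
    have hmaxpos : 0 < max s 1 := lt_of_lt_of_le one_pos (le_max_right _ _)
    have hcpos : 0 < c := by positivity
    have hc1 : c ≤ 1 := by
      rw [hcdef]
      rw [inv_le_one_iff₀]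
      right; exact le_max_right _ _
    have hflow' : T.IsFlow (fun v => c * θ v) := T.flow_smul θ hflow c
    have hresp' : T.Respects (fun v => c * θ v) (fun v => min (κ v) 1) := by
      intro v hv
      refine le_min ?_ ?_
      · calc c * θ v ≤ 1 * θ v := mul_le_mul_left hc1 _
          _ = θ v := one_mul _
          _ ≤ κ v := hresp v hv
      · calc c * θ v ≤ c * max s 1 :=
              mul_le_mul_right ((T.flow_le_root θ hflow v).trans (le_max_left _ _)) _
          _ = 1 := inv_mul_cancel₀ hmaxpos.ne'
    refine lt_of_lt_of_le ?_
      (le_iSup (fun θ : {θ : T.V → ℝ≥0 // T.IsFlow θ ∧ T.Respects θ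
        (fun v => min (κ v) 1)} => (T.strength θ.1 : ℝ≥0∞)) ⟨_, hflow', hresp'⟩)
    simp only [GrowingTree.strength]
    exact_mod_cast mul_pos hcpos hs
  · intro h
    obtain ⟨⟨θ, hflow, hresp⟩, hpos⟩ := lt_iSup_iff.mp h
    have hresp' : T.Respects θ κ := fun v hv => (hresp v hv).trans (min_le_left _ _)
    exact lt_of_lt_of_le hpos
      (le_iSup (fun θ : {θ : T.V → ℝ≥0 // T.IsFlow θ ∧ T.Respects θ κ} =>
        (T.strength θ.1 : ℝ≥0∞)) ⟨θ, hflow, hresp'⟩)
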